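/- arXiv:1304.2295 — 2 statements merged into one kernel-verified Lean document; each statement's English description precedes it below -/
import Mathlib

section
/- Let T be a finite NW-deterministic tile set such that {0,1,…,n}² has no valid Wang tiling by T. Then for the Mealy automaton 𝒜_T, for every state word u ∈ A^{2n}, every p ∈ Σ^n and every q ∈ Σ^ω, one has σ_u(pq) = σ_u(p) ⊥^ω; i.e., after applying 2n generators, all output letters beyond position n equal ⊥. -/
/-- A Mealy automaton with state set `A` and alphabet `X`:
a transition map `δ : A × X → A` and an output map `σ : A × X → X`. -/
structure Mealy (A X : Type*) where
  δ : A → X → A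
  σ : A → X → X

namespace Mealy

variable {A X : Type*} (M : Mealy A X)

/-- The state reached from state `a` after reading the finite word `u`. -/
def stA : A → List X → A
  | a, [] => a
  | a, x :: u => stA (M.δ a x) u

/-- The output word produced by the single state `a` on the finite input word `u`. -/
def outA : A → List X → List X
  | _, [] => []
  | a, x :: u => M.σ a x :: outA (M.δ a x) u

/-- The extended output map: the action `σ_as` of a state word `as` on a finite word. -/
def outW (as : List A) (u : List X) : List X :=
  as.foldl (fun w b => M.outA b w) u

/-- The extended transition map: `δ_u` applied to a state word. -/
def stW : List A → List X → List A
  | [], _ => []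
  | a :: as, u => M.stA a u :: stW as (M.outA a u)

/-- The action of a single state `a` on an infinite word. -/
def outInf (a : A) (w : ℕ → X) : ℕ → X :=
  fun n => M.σ (M.stA a (List.ofFn fun i : Fin n => w i)) (w n)

/-- The action `σ_as` of a state word on an infinite word. -/
def outWInf (as : List A) (w : ℕ → X) : ℕ → X :=
  as.foldl (fun v b => M.outInf b v) w

/-- The semigroup generated by the Mealy automaton, as the set of all
transformations of infinite words given by nonempty state words. -/
def genSet : Set ((ℕ → X) → (ℕ → X)) :=
  {f | ∃ as : List A, as ≠ [] ∧ f = M.outWInf as}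

end Mealy

/-- Concatenation of a finite word with an infinite word. -/
def listApp {X : Type*} (p : List X) (q : ℕ → X) : ℕ → X :=
  fun n => if h : n < p.length then p.get ⟨n, h⟩ else q (n - p.length)

/-- A tile set is NW-deterministic if each tile is determined by its
north and west colors. -/
def NWDet {T C : Type*} (N _S _E W : T → C) : Prop :=
  ∀ s t : T, N s = N t → W s = W t → s = t

open Classical in
/-- The Mealy automaton `𝒜_T` of a tile set: states and letters are tiles
together with a fresh symbol `⊥` (here `none`); the transition is the reset
`δ(x,y) = y`; the output `σ(s,t)` is the unique tile `r` with `r_N = t_S`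
and `r_W = s_E` if it exists, and `⊥` otherwise. -/
noncomputable def tileM {T C : Type*} (N S E W : T → C) :
    Mealy (Option T) (Option T) where
  δ := fun _ y => y
  σ := fun a x =>
    match a, x with
    | some s, some t =>
        if h : ∃ r : T, N r = S t ∧ W r = E s then some h.choose else none
    | _, _ => none

/-- A valid Wang tiling of the plane `ℤ²`. -/
def ValidZ2 {T C : Type*} (N S E W : T → C) (t : ℤ × ℤ → T) : Prop :=
  ∀ x y : ℤ, N (t (x, y)) = S (t (x, y + 1)) ∧ E (t (x, y)) = W (t (x + 1, y))

/-- A valid Wang tiling of the square `{0, 1, …, n}²`. -/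
def ValidSquare {T C : Type*} (N S E W : T → C) (n : ℕ) (t : ℕ → ℕ → T) : Prop :=
  (∀ x y : ℕ, x ≤ n → y < n → N (t x y) = S (t x (y + 1))) ∧
  (∀ x y : ℕ, x < n → y ≤ n → E (t x y) = W (t (x + 1) y))


section Aux

namespace Mealy
variable {A X : Type*} (M : Mealy A X)

lemma outA_length (a : A) (p : List X) : (M.outA a p).length = p.length := by
  induction p generalizing a with
  | nil => rfl
  | cons x p ih => simp [outA, ih]

lemma outW_length (as : List A) (p : List X) : (M.outW as p).length = p.length := by
  induction as generalizing p with
  | nil => rfl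
  | cons b as ih => simp [outW, List.foldl_cons] at *; rw [ih, outA_length]

lemma outInf_zero (a : A) (w : ℕ → X) : M.outInf a w 0 = M.σ a (w 0) := by
  simp [outInf, stA]

lemma outInf_succ (a : A) (w : ℕ → X) (m : ℕ) :
    M.outInf a w (m + 1) = M.outInf (M.δ a (w 0)) (fun k => w (k + 1)) m := by
  simp [outInf, List.ofFn_succ, stA]

lemma outWInf_nil (w : ℕ → X) : M.outWInf [] w = w := rfl

lemma outWInf_cons (b : A) (as : List A) (w : ℕ → X) :
    M.outWInf (b :: as) w = M.outWInf as (M.outInf b w) := rfl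

lemma outWInf_snoc (as : List A) (b : A) (w : ℕ → X) :
    M.outWInf (as ++ [b]) w = M.outInf b (M.outWInf as w) := by
  simp [outWInf, List.foldl_append]

lemma outW_cons (b : A) (as : List A) (p : List X) :
    M.outW (b :: as) p = M.outW as (M.outA b p) := rfl


end Mealy

lemma listApp_cons_zero {X : Type*} (x : X) (p : List X) (q : ℕ → X) :
    listApp (x :: p) q 0 = x := by simp [listApp]

lemma listApp_cons_tail {X : Type*} (x : X) (p : List X) (q : ℕ → X) :
    (fun k => listApp (x :: p) q (k + 1)) = listApp p q := by
  funext k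
  simp only [listApp, List.length_cons]
  by_cases h : k < p.length
  · rw [dif_pos (by omega), dif_pos h]; rfl
  · rw [dif_neg (by omega), dif_neg h]
    congr 1; omega


namespace Mealy
variable {A X : Type*} (M : Mealy A X)

lemma outInf_listApp_lt (p : List X) (a : A) (q : ℕ → X) (m : ℕ) (hm : m < p.length) :
    M.outInf a (listApp p q) m = (M.outA a p).get ⟨m, by rw [M.outA_length]; exact hm⟩ := by
  induction p generalizing a q m with
  | nil => simp at hm
  | cons x p ih =>
      cases m with
      | zero => simp [outInf_zero, listApp_cons_zero, outA]
      | succ m =>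
          rw [outInf_succ, listApp_cons_zero, listApp_cons_tail]
          simp only [List.length_cons] at hm
          rw [ih _ _ _ (by omega)]
          rfl

lemma outInf_listApp (p : List X) (a : A) (q : ℕ → X) :
    M.outInf a (listApp p q) =
      listApp (M.outA a p) (fun k => M.outInf a (listApp p q) (k + p.length)) := by
  funext m
  by_cases hm : m < p.length
  · rw [M.outInf_listApp_lt p a q m hm, listApp, dif_pos]
  · rw [listApp, dif_neg (by rw [M.outA_length]; exact hm)]
    rw [M.outA_length]
    congr 1
    omega

lemma outWInf_listApp (as : List A) (p : List X) (q : ℕ → X) :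
    ∃ q' : ℕ → X, M.outWInf as (listApp p q) = listApp (M.outW as p) q' := by
  induction as generalizing p q with
  | nil => exact ⟨q, rfl⟩
  | cons b as ih =>
      rw [outWInf_cons, M.outInf_listApp p b q, outW_cons]
      exact ih _ _


end Mealy

section TileAux
variable {T C : Type*} (N S E W : T → C)

lemma tile_sigma_some {a x : Option T} {r : T}
    (h : (tileM N S E W).σ a x = some r) :
    ∃ s t, a = some s ∧ x = some t ∧ N r = S t ∧ W r = E s := by
  match a, x with
  | some s, some t =>
      refine ⟨s, t, rfl, rfl, ?_⟩
      simp only [tileM] at h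
      split at h
      · next hex => cases h; exact hex.choose_spec
      · exact absurd h (by simp)
  | none, some t => exact absurd h (by simp [tileM])
  | some s, none => exact absurd h (by simp [tileM])
  | none, none => exact absurd h (by simp [tileM])

lemma tile_outInf_succ (a : Option T) (v : ℕ → Option T) (m : ℕ) :
    (tileM N S E W).outInf a v (m + 1) = (tileM N S E W).σ (v m) (v (m + 1)) := by
  induction m generalizing a v with
  | zero => rw [Mealy.outInf_succ, Mealy.outInf_zero]; rfl
  | succ m ih =>
      rw [Mealy.outInf_succ, ih]

end TileAux

end Aux

/-- if `{0, …, n}²` has no valid Wang tiling by the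
NW-deterministic tile set `T`, then for every state word `u` of length `2n`,
every `p ∈ Σ^n` and every `q ∈ Σ^ω`, we have `σ_u(pq) = σ_u(p) ⊥^ω`. -/
theorem stmt_10 {T C : Type*} [Fintype T] (N S E W : T → C)
    (hNW : NWDet N S E W) (n : ℕ)
    (h : ¬∃ t : ℕ → ℕ → T, ValidSquare N S E W n t)
    (u : List (Option T)) (hu : u.length = 2 * n)
    (p : List (Option T)) (hp : p.length = n) (q : ℕ → Option T) :
    (tileM N S E W).outWInf u (listApp p q) =
      listApp ((tileM N S E W).outW u p) (fun _ => none) := by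
  classical
  set M := tileM N S E W with hM
  have hlen : (M.outW u p).length = n := by rw [M.outW_length, hp]
  funext m
  by_cases hm : m < n
  · obtain ⟨q', hq'⟩ := M.outWInf_listApp u p q
    rw [hq']
    simp only [listApp]
    rw [dif_pos (by omega), dif_pos (by omega)]
  · -- hard case: m ≥ n
    rw [listApp, dif_neg (by omega)]
    set tile : ℕ → ℕ → Option T := fun j => M.outWInf (u.take j) (listApp p q) with htile
    have htop : M.outWInf u (listApp p q) = tile (2 * n) := by
      rw [htile]; simp only []
      rw [← hu, List.take_length]
    rw [htop]
    by_contra hc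
    obtain ⟨r0, hr0⟩ := Option.ne_none_iff_exists'.mp hc
    have hrec : ∀ j (hj : j < u.length),
        tile (j + 1) = M.outInf (u[j]'hj) (tile j) := by
      intro j hj
      simp only [htile]
      rw [← List.take_concat_get' u j hj, M.outWInf_snoc]
    have backS : ∀ j (hj : j < u.length) m' r, tile (j + 1) (m' + 1) = some r →
        ∃ s t, tile j m' = some s ∧ tile j (m' + 1) = some t ∧
          N r = S t ∧ W r = E s := by
      intro j hj m' r hr
      rw [hrec j hj] at hr
      rw [tile_outInf_succ] at hr
      obtain ⟨s, t, hs, ht, h1, h2⟩ := tile_sigma_some N S E W hr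
      exact ⟨s, t, hs, ht, h1, h2⟩
    have back0 : ∀ j (hj : j < u.length) r, tile (j + 1) 0 = some r →
        ∃ t, tile j 0 = some t ∧ N r = S t := by
      intro j hj r hr
      rw [hrec j hj] at hr
      rw [M.outInf_zero] at hr
      obtain ⟨s, t, _, ht, h1, _⟩ := tile_sigma_some N S E W hr
      exact ⟨t, ht, h1⟩
    have claim : ∀ k, k ≤ 2 * n → ∀ m', m - k ≤ m' → m' ≤ m →
        ∃ r, tile (2 * n - k) m' = some r := by
      intro k
      induction k with
      | zero =>
          intro _ m' h1 h2
          have : m' = m := by omega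
          subst this
          exact ⟨r0, by simpa using hr0⟩
      | succ k ih =>
          intro hk m' h1 h2
          have hj : 2 * n - (k + 1) < u.length := by omega
          have h2nk : 2 * n - k = (2 * n - (k + 1)) + 1 := by omega
          by_cases hmm : m' < m
          · obtain ⟨r, hr⟩ := ih (by omega) (m' + 1) (by omega) (by omega)
            rw [h2nk] at hr
            obtain ⟨s, t, hs, ht, _, _⟩ := backS _ hj m' r hr
            exact ⟨s, hs⟩
          · have hm'm : m' = m := by omega
            subst hm'm
            obtain ⟨r, hr⟩ := ih (by omega) m' (by omega) le_rfl
            rw [h2nk] at hr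
            cases m' with
            | zero =>
                obtain ⟨t, ht, _⟩ := back0 _ hj r hr
                exact ⟨t, ht⟩
            | succ m'' =>
                obtain ⟨s, t, hs, ht, _, _⟩ := backS _ hj m'' r hr
                exact ⟨t, ht⟩
    have key : ∀ a b, a ≤ n → b ≤ n →
        ∃ r, tile (n + a - b) (m - n + a) = some r := by
      intro a b ha hb
      have hc1 := claim (n - a + b) (by omega) (m - n + a) (by omega) (by omega)
      have he : 2 * n - (n - a + b) = n + a - b := by omega
      rwa [he] at hc1
    apply h
    set t : ℕ → ℕ → T := fun a b =>
      if hab : a ≤ n ∧ b ≤ n then (key a b hab.1 hab.2).choose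
      else (key 0 0 (Nat.zero_le n) (Nat.zero_le n)).choose with ht
    have spec : ∀ a b, a ≤ n → b ≤ n →
        tile (n + a - b) (m - n + a) = some (t a b) := by
      intro a b ha hb
      simp only [ht]
      rw [dif_pos ⟨ha, hb⟩]
      exact (key a b ha hb).choose_spec
    refine ⟨t, ?_, ?_⟩
    · -- vertical: N (t x y) = S (t x (y+1))
      intro x y hx hy
      have hr := spec x y hx (by omega)
      have hr' := spec x (y + 1) hx (by omega)
      have hj : n + x - (y + 1) < u.length := by omega
      have hjj : n + x - y = (n + x - (y + 1)) + 1 := by omega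
      rw [hjj] at hr
      rcases Nat.eq_zero_or_eq_succ_pred (m - n + x) with h0 | hsucc
      · rw [h0] at hr hr'
        obtain ⟨tt, htt, hNS⟩ := back0 _ hj _ hr
        rw [hr'] at htt
        rw [hNS, Option.some.inj htt]
      · rw [hsucc] at hr hr'
        obtain ⟨s, tt, hs, htt, hNS, _⟩ := backS _ hj _ _ hr
        rw [htt] at hr'
        rw [hNS, Option.some.inj hr'.symm]
    · -- horizontal: E (t x y) = W (t (x+1) y)
      intro x y hx hy
      have hr := spec x y (by omega) hy
      have hr' := spec (x + 1) y (by omega) hy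
      have hj : n + x - y < u.length := by omega
      have he1 : n + (x + 1) - y = (n + x - y) + 1 := by omega
      have he2 : m - n + (x + 1) = (m - n + x) + 1 := by omega
      rw [he1, he2] at hr'
      obtain ⟨s, tt, hs, htt, _, hWE⟩ := backS _ hj _ _ hr'
      rw [hs] at hr
      rw [hWE, Option.some.inj hr.symm]
end

section
/- Let T be a finite NW-deterministic tile set and suppose σ_u(pq) has a letter different from ⊥ at some position n + k (k ∈ ℕ) after applying a state word u of length 2n, where p ∈ Σ^n, q ∈ Σ^ω. Then {0,1,…,n}² admits a valid Wang tiling by T, given by the tiles f(i+j, i+k) for 0 ≤ i, j ≤ n (which are all ≠ ⊥), where f(i,j) is the j-th letter of the image of pq under the first i states of u. -/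
section AuxLemmas

variable {T C : Type*} (N S E W : T → C)

lemma tileM_stA (a : Option T) (l : List (Option T)) :
    (tileM N S E W).stA a l = l.getLastD a := by
  induction l generalizing a with
  | nil => rfl
  | cons x l ih =>
      rw [Mealy.stA, List.getLastD_cons]
      exact ih x

lemma tileM_outInf_succ (a : Option T) (w : ℕ → Option T) (m : ℕ) :
    (tileM N S E W).outInf a w (m + 1) = (tileM N S E W).σ (w m) (w (m + 1)) := by
  rw [Mealy.outInf, tileM_stA, List.ofFn_succ']
  simp [List.concat_eq_append]

lemma tileM_outInf_zero (a : Option T) (w : ℕ → Option T) :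
    (tileM N S E W).outInf a w 0 = (tileM N S E W).σ a (w 0) := by
  rw [Mealy.outInf, List.ofFn_zero, tileM_stA]
  rfl

open Classical in
lemma tileM_sigma_eq_some {s t : Option T} {r : T}
    (h : (tileM N S E W).σ s t = some r) :
    ∃ s' t', s = some s' ∧ t = some t' ∧ N r = S t' ∧ W r = E s' := by
  match s, t with
  | none, none => exact absurd h (by simp [tileM])
  | none, some _ => exact absurd h (by simp [tileM])
  | some _, none => exact absurd h (by simp [tileM])
  | some s', some t' =>
      refine ⟨s', t', rfl, rfl, ?_⟩
      have h' : (if hx : ∃ r : T, N r = S t' ∧ W r = E s' then some hx.choose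
          else none) = some r := h
      by_cases hx : ∃ r : T, N r = S t' ∧ W r = E s'
      · rw [dif_pos hx] at h'
        obtain rfl : hx.choose = r := by injection h'
        exact hx.choose_spec
      · rw [dif_neg hx] at h'
        exact absurd h' (by simp)

lemma tileM_sigma_ne_none {s t : Option T}
    (h : (tileM N S E W).σ s t ≠ none) : s ≠ none ∧ t ≠ none := by
  obtain ⟨r, hr⟩ := Option.ne_none_iff_exists'.mp h
  obtain ⟨s', t', hs, ht, -⟩ := tileM_sigma_eq_some N S E W hr
  exact ⟨by simp [hs], by simp [ht]⟩

end AuxLemmas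

/-- if applying a state word `u` of length `2n` to `pq`
(`p ∈ Σ^n`, `q ∈ Σ^ω`) yields a letter `≠ ⊥` at some position `n + k`, then
all tiles `f(i+j, i+k)` for `0 ≤ i, j ≤ n` are `≠ ⊥` and they form a valid
Wang tiling of `{0, 1, …, n}²`, the tile `f(i+j, i+k)` being placed at
position `(i, n−j)`. (Here `f(i,j)` is the `j`-th letter of the image of
`pq` under the first `i` states of `u`.) -/
theorem stmt_17 {T C : Type*} [Fintype T] (N S E W : T → C)
    (hNW : NWDet N S E W) (n : ℕ) (u : List (Option T)) (hu : u.length = 2 * n)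
    (p : List (Option T)) (hp : p.length = n) (q : ℕ → Option T)
    (f : ℕ → ℕ → Option T)
    (hf : ∀ i j, f i j = (tileM N S E W).outWInf (u.take i) (listApp p q) j)
    (k : ℕ) (h : f (2 * n) (n + k) ≠ none) :
    (∀ i j : ℕ, i ≤ n → j ≤ n → f (i + j) (i + k) ≠ none) ∧
    ∃ t : ℕ → ℕ → T, ValidSquare N S E W n t ∧
      ∀ i j : ℕ, i ≤ n → j ≤ n → f (i + j) (i + k) = some (t i (n - j)) := by
  -- the crucial recurrence relations
  have hout : ∀ a : ℕ, ∀ ha : a < u.length, ∀ j,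
      f (a + 1) j = (tileM N S E W).outInf (u.get ⟨a, ha⟩)
        ((tileM N S E W).outWInf (u.take a) (listApp p q)) j := by
    intro a ha j
    rw [hf]
    unfold Mealy.outWInf
    simp only [List.take_succ, List.getElem?_eq_getElem ha, Option.toList_some,
      List.foldl_append]
    rfl
  have hstep1 : ∀ a b : ℕ, a < u.length →
      f (a + 1) (b + 1) = (tileM N S E W).σ (f a b) (f a (b + 1)) := by
    intro a b ha
    rw [hout a ha (b + 1), tileM_outInf_succ, ← hf a b, ← hf a (b + 1)]
  have hstep : ∀ a b : ℕ, a < u.length →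
      ∃ s : Option T, f (a + 1) b = (tileM N S E W).σ s (f a b) := by
    intro a b ha
    cases b with
    | zero =>
        refine ⟨u.get ⟨a, ha⟩, ?_⟩
        rw [hout a ha 0, tileM_outInf_zero, ← hf a 0]
    | succ m => exact ⟨f a m, hstep1 a m ha⟩
  -- no tile in the triangle is ⊥
  have hnz : ∀ m i j : ℕ, i ≤ n → j ≤ n → 2 * n = i + j + m →
      f (i + j) (i + k) ≠ none := by
    intro m
    induction m with
    | zero =>
        intro i j hi hj hm
        have e1 : i + j = 2 * n := by omega
        have e2 : i + k = n + k := by omega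
        rw [e1, e2]
        exact h
    | succ m ih =>
        intro i j hi hj hm
        by_cases hin : i < n
        · have h1 := ih (i + 1) j (by omega) hj (by omega)
          have e : f (i + j + 1) (i + k + 1) ≠ none := by
            have e1 : i + j + 1 = i + 1 + j := by omega
            have e2 : i + k + 1 = i + 1 + k := by omega
            rw [e1, e2]; exact h1
          rw [hstep1 (i + j) (i + k) (by omega)] at e
          exact (tileM_sigma_ne_none N S E W e).1
        · have h1 := ih i (j + 1) hi (by omega) (by omega)
          obtain ⟨s, hs⟩ := hstep (i + j) (i + k) (by omega)
          have e : f (i + j + 1) (i + k) ≠ none := by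
            have e1 : i + j + 1 = i + (j + 1) := by omega
            rw [e1]; exact h1
          rw [hs] at e
          exact (tileM_sigma_ne_none N S E W e).2
  have hg : ∀ i j : ℕ, i ≤ n → j ≤ n → f (i + j) (i + k) ≠ none :=
    fun i j hi hj => hnz (2 * n - (i + j)) i j hi hj (by omega)
  refine ⟨hg, ?_⟩
  obtain ⟨r0, hr0⟩ := Option.ne_none_iff_exists'.mp h
  have ht : ∀ i j : ℕ, i ≤ n → j ≤ n →
      f (i + j) (i + k) = some ((f (i + (n - (n - j))) (i + k)).getD r0) := by
    intro i j hi hj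
    have e1 : n - (n - j) = j := by omega
    rw [e1]
    obtain ⟨v, hv⟩ := Option.ne_none_iff_exists'.mp (hg i j hi hj)
    rw [hv]; rfl
  refine ⟨fun i y => (f (i + (n - y)) (i + k)).getD r0, ⟨?_, ?_⟩, ?_⟩
  · -- vertical matching
    intro x y hx hy
    have hj1 : 1 ≤ n - y := by omega
    have hjn : n - y ≤ n := by omega
    obtain ⟨s, hs⟩ := hstep (x + (n - y) - 1) (x + k) (by omega)
    have e1 : x + (n - y) - 1 + 1 = x + (n - y) := by omega
    have e2 : x + (n - y) - 1 = x + (n - y - 1) := by omega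
    rw [e1, e2] at hs
    have hA := ht x (n - y) hx hjn
    have hB := ht x (n - y - 1) hx (by omega)
    have ey : n - (n - y) = y := by omega
    have ey' : n - (n - y - 1) = y + 1 := by omega
    rw [ey] at hA
    rw [ey'] at hB
    rw [hA, hB] at hs
    obtain ⟨s', t', -, ht', hNS, -⟩ := tileM_sigma_eq_some N S E W hs.symm
    injection ht' with h1
    simp only [h1]
    exact hNS
  · -- horizontal matching
    intro x y hx hy
    have hjn : n - y ≤ n := by omega
    have hs := hstep1 (x + (n - y)) (x + k) (by omega)
    have e1 : x + (n - y) + 1 = x + 1 + (n - y) := by omega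
    have e2 : x + k + 1 = x + 1 + k := by omega
    rw [e1, e2] at hs
    have hA := ht x (n - y) (by omega) hjn
    have hB := ht (x + 1) (n - y) (by omega) hjn
    have ey : n - (n - y) = y := by omega
    rw [ey] at hA
    rw [ey] at hB
    rw [hA, hB] at hs
    obtain ⟨s', t', hs', -, -, hWE⟩ := tileM_sigma_eq_some N S E W hs.symm
    injection hs' with h1
    simp only [h1]
    exact hWE.symm
  · -- the tiles of the tiling
    intro i j hi hj
    exact ht i j hi hj
end
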